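/- Let θ : [0,∞) × [0,∞) → [0,∞) be concave and positively 1-homogeneous (θ(λs, λt) = λ·θ(s,t) for all λ > 0). Define A : ℝ × [0,∞) × [0,∞) → [0,∞] by A(v,r,s) := v²/(2θ(r,s)) if θ(r,s) > 0, A(v,r,s) := 0 if v = 0 and θ(r,s) = 0, and A(v,r,s) := ∞ otherwise. Then A is jointly convex as an extended-real-valued function on ℝ × [0,∞) × [0,∞), and positively 1-homogeneous: A(λv, λr, λs) = λ·A(v,r,s) for all λ > 0. -/

import Mathlib

open scoped ENNReal Classical

/-- The integrand `A(v,r,s)` of the nonlocal action functional, built from an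
interpolation function `θ`: `A(v,r,s) = v²/(2θ(r,s))` if `θ(r,s) > 0`, `0` if
`v = 0` and `θ(r,s) = 0`, and `∞` otherwise. -/
noncomputable def Afun (θ : ℝ → ℝ → ℝ) (v r s : ℝ) : ℝ≥0∞ :=
  if 0 < θ r s then ENNReal.ofReal (v ^ 2 / (2 * θ r s))
  else if v = 0 ∧ θ r s = 0 then 0
  else ⊤

lemma Afun_keyineq (a b v₁ v₂ θ₁ θ₂ θt : ℝ) (ha : 0 < a) (hb : 0 < b)
    (h1 : 0 < θ₁) (h2 : 0 < θ₂) (ht : a * θ₁ + b * θ₂ ≤ θt) :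
    (a * v₁ + b * v₂) ^ 2 / (2 * θt) ≤ a * (v₁ ^ 2 / (2 * θ₁)) + b * (v₂ ^ 2 / (2 * θ₂)) := by
  have hθt : 0 < θt := lt_of_lt_of_le (by positivity) ht
  rw [mul_div_assoc' a, mul_div_assoc' b, div_add_div _ _ (by positivity) (by positivity),
    div_le_div_iff₀ (by positivity) (by positivity)]
  nlinarith [mul_nonneg (mul_nonneg ha.le hb.le) (sq_nonneg (v₁ * θ₂ - v₂ * θ₁)),
    mul_le_mul_of_nonneg_left ht (by positivity : (0:ℝ) ≤ 4*(a*v₁^2*θ₂ + b*v₂^2*θ₁))]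

lemma Afun_mixedineq (b vB θB θt : ℝ) (hb : 0 < b) (h2 : 0 < θB) (ht : b * θB ≤ θt) :
    (b * vB) ^ 2 / (2 * θt) ≤ b * (vB ^ 2 / (2 * θB)) := by
  have hθt : 0 < θt := lt_of_lt_of_le (by positivity) ht
  rw [mul_div_assoc' b, div_le_div_iff₀ (by positivity) (by positivity)]
  nlinarith [mul_le_mul_of_nonneg_left ht (by positivity : (0:ℝ) ≤ 2 * (b * vB^2))]

lemma Afun_zero (θ : ℝ → ℝ → ℝ) (r s : ℝ) (h : 0 ≤ θ r s) : Afun θ 0 r s = 0 := by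
  rcases h.lt_or_eq with h' | h'
  · simp [Afun, h']
  · simp [Afun, ← h', lt_irrefl]

lemma Afun_top (θ : ℝ → ℝ → ℝ) (v r s : ℝ) (h : θ r s = 0) (hv : v ≠ 0) :
    Afun θ v r s = ⊤ := by
  rw [Afun, if_neg (by rw [h]; exact lt_irrefl 0), if_neg (by simp [hv])]

theorem Afun_convex_homogeneous (θ : ℝ → ℝ → ℝ)
    (hnonneg : ∀ r s : ℝ, 0 ≤ r → 0 ≤ s → 0 ≤ θ r s)
    (hconc : ConcaveOn ℝ (Set.Ici (0:ℝ) ×ˢ Set.Ici (0:ℝ)) (fun p : ℝ × ℝ => θ p.1 p.2))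
    (hhom : ∀ lam r s : ℝ, 0 < lam → 0 ≤ r → 0 ≤ s → θ (lam * r) (lam * s) = lam * θ r s) :
    (∀ v₁ r₁ s₁ v₂ r₂ s₂ t : ℝ, 0 ≤ r₁ → 0 ≤ s₁ → 0 ≤ r₂ → 0 ≤ s₂ →
        t ∈ Set.Icc (0:ℝ) 1 →
        Afun θ (t * v₁ + (1 - t) * v₂) (t * r₁ + (1 - t) * r₂) (t * s₁ + (1 - t) * s₂)
          ≤ ENNReal.ofReal t * Afun θ v₁ r₁ s₁ + ENNReal.ofReal (1 - t) * Afun θ v₂ r₂ s₂)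
    ∧ (∀ lam v r s : ℝ, 0 < lam → 0 ≤ r → 0 ≤ s →
        Afun θ (lam * v) (lam * r) (lam * s) = ENNReal.ofReal lam * Afun θ v r s) := by
  constructor
  · intro v₁ r₁ s₁ v₂ r₂ s₂ t hr₁ hs₁ hr₂ hs₂ ht
    obtain ⟨ht0, ht1⟩ := ht
    rcases ht0.eq_or_lt with rfl | ht0
    · simp
    rcases ht1.eq_or_lt with rfl | ht1
    · simp
    have ht1' : 0 < 1 - t := by linarith
    have hmem1 : ((r₁, s₁) : ℝ × ℝ) ∈ Set.Ici (0:ℝ) ×ˢ Set.Ici (0:ℝ) := ⟨hr₁, hs₁⟩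
    have hmem2 : ((r₂, s₂) : ℝ × ℝ) ∈ Set.Ici (0:ℝ) ×ˢ Set.Ici (0:ℝ) := ⟨hr₂, hs₂⟩
    have hcc := hconc.2 hmem1 hmem2 ht0.le ht1'.le (by ring)
    simp only [Prod.smul_mk, Prod.mk_add_mk, smul_eq_mul] at hcc
    have hcc' : t * θ r₁ s₁ + (1 - t) * θ r₂ s₂
        ≤ θ (t * r₁ + (1 - t) * r₂) (t * s₁ + (1 - t) * s₂) := hcc
    have hθ1 : 0 ≤ θ r₁ s₁ := hnonneg _ _ hr₁ hs₁
    have hθ2 : 0 ≤ θ r₂ s₂ := hnonneg _ _ hr₂ hs₂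
    rcases hθ1.lt_or_eq with h1 | h1
    · rcases hθ2.lt_or_eq with h2 | h2
      · -- both positive
        have hθt : 0 < θ (t * r₁ + (1 - t) * r₂) (t * s₁ + (1 - t) * s₂) :=
          lt_of_lt_of_le (by positivity) hcc'
        rw [Afun, if_pos hθt, Afun, if_pos h1, Afun, if_pos h2,
          ← ENNReal.ofReal_mul ht0.le, ← ENNReal.ofReal_mul ht1'.le,
          ← ENNReal.ofReal_add (by positivity) (by positivity)]
        exact ENNReal.ofReal_le_ofReal (Afun_keyineq t (1 - t) v₁ v₂ _ _ _ ht0 ht1' h1 h2 hcc')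
      · -- θ₂ = 0
        rcases eq_or_ne v₂ 0 with rfl | hv₂
        · have hvt : t * v₁ + (1 - t) * 0 = t * v₁ := by ring
          have hθt : 0 < θ (t * r₁ + (1 - t) * r₂) (t * s₁ + (1 - t) * s₂) :=
            lt_of_lt_of_le (by nlinarith) hcc'
          rw [hvt, Afun_zero θ r₂ s₂ h2.le, mul_zero, add_zero, Afun, if_pos hθt,
            Afun, if_pos h1, ← ENNReal.ofReal_mul ht0.le]
          exact ENNReal.ofReal_le_ofReal (Afun_mixedineq t v₁ _ _ ht0 h1 (by nlinarith))
        · rw [Afun_top θ v₂ r₂ s₂ h2.symm hv₂,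
            ENNReal.mul_top (ENNReal.ofReal_pos.mpr ht1').ne']
          simp
    · -- θ₁ = 0
      rcases eq_or_ne v₁ 0 with rfl | hv₁
      · rcases hθ2.lt_or_eq with h2 | h2
        · have hvt : t * 0 + (1 - t) * v₂ = (1 - t) * v₂ := by ring
          have hθt : 0 < θ (t * r₁ + (1 - t) * r₂) (t * s₁ + (1 - t) * s₂) :=
            lt_of_lt_of_le (by nlinarith) hcc'
          rw [hvt, Afun_zero θ r₁ s₁ h1.le, mul_zero, zero_add, Afun, if_pos hθt,
            Afun, if_pos h2, ← ENNReal.ofReal_mul ht1'.le]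
          exact ENNReal.ofReal_le_ofReal (Afun_mixedineq (1 - t) v₂ _ _ ht1' h2 (by nlinarith))
        · rcases eq_or_ne v₂ 0 with rfl | hv₂
          · have hvt : t * 0 + (1 - t) * 0 = 0 := by ring
            rw [hvt, Afun_zero θ _ _ (hnonneg _ _ (by positivity) (by positivity))]
            exact zero_le
          · rw [Afun_top θ v₂ r₂ s₂ h2.symm hv₂,
              ENNReal.mul_top (ENNReal.ofReal_pos.mpr ht1').ne']
            simp
      · rw [Afun_top θ v₁ r₁ s₁ h1.symm hv₁,
          ENNReal.mul_top (ENNReal.ofReal_pos.mpr ht0).ne']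
        simp
  · intro lam v r s hlam hr hs
    have hθ := hhom lam r s hlam hr hs
    have h0 := hnonneg r s hr hs
    rcases h0.lt_or_eq with h' | h'
    · have h'' : 0 < θ (lam * r) (lam * s) := by rw [hθ]; positivity
      rw [Afun, if_pos h'', Afun, if_pos h', hθ, ← ENNReal.ofReal_mul hlam.le]
      congr 1
      field_simp
    · have h'' : θ (lam * r) (lam * s) = 0 := by rw [hθ, ← h', mul_zero]
      rcases eq_or_ne v 0 with rfl | hv
      · rw [mul_zero, Afun_zero θ _ _ h''.ge, Afun_zero θ _ _ h'.le, mul_zero]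
      · have hlv : lam * v ≠ 0 := mul_ne_zero hlam.ne' hv
        rw [Afun_top θ _ _ _ h'' hlv, Afun_top θ v r s h'.symm hv,
          ENNReal.mul_top (ENNReal.ofReal_pos.mpr hlam).ne']
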